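/- Let K be a field of characteristic zero and let g(x, y) be a polynomial in two variables with rational coefficients. Suppose the set P = {u ∈ K : there exists s ∈ K with g(u, s) = 0} is finite and contains an element w that is transcendental over ℚ. Then some element of K̃ is transcendental over ℚ. -/

import Mathlib

/-- A map `f` is *arithmetic* on a subset `A` of a field `K`. -/
def ArithmeticMap {K : Type*} [Field K] (A : Set K) (f : K → K) : Prop :=
  ((1 : K) ∈ A → f 1 = 1) ∧
  (∀ a b : K, a ∈ A → b ∈ A → a + b ∈ A → f (a + b) = f a + f b) ∧
  (∀ a b : K, a ∈ A → b ∈ A → a * b ∈ A → f (a * b) = f a * f b)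

/-- An element `r` of a field `K` is *arithmetically fixed* if there is a finite set
`A ⊆ K` with `r ∈ A` such that every arithmetic map `f : A → K` fixes `r`. -/
def ArithFixed {K : Type*} [Field K] (r : K) : Prop :=
  ∃ A : Finset K, r ∈ A ∧ ∀ f : K → K, ArithmeticMap (↑A : Set K) f → f r = r

section Aux

variable {K : Type*} [Field K] [CharZero K]

set_option linter.unusedSectionVars false

noncomputable local instance : DecidableEq K := Classical.decEq K

theorem ArithmeticMap.mono {A B : Set K} {f : K → K} (h : ArithmeticMap B f) (hAB : A ⊆ B) :
    ArithmeticMap A f :=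
  ⟨fun h1 => h.1 (hAB h1), fun a b ha hb hab => h.2.1 a b (hAB ha) (hAB hb) (hAB hab),
    fun a b ha hb hab => h.2.2 a b (hAB ha) (hAB hb) (hAB hab)⟩

/-- There is a finite set such that every arithmetic map on it satisfies `Q`. -/
def Forces (Q : (K → K) → Prop) : Prop :=
  ∃ B : Finset K, ∀ f : K → K, ArithmeticMap (↑B : Set K) f → Q f

theorem Forces.mono {Q R : (K → K) → Prop} (h : Forces Q) (hqr : ∀ f, Q f → R f) :
    Forces R :=
  h.imp fun _ hB f hf => hqr f (hB f hf)

theorem Forces.and {Q R : (K → K) → Prop} (hQ : Forces Q) (hR : Forces R) :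
    Forces fun f => Q f ∧ R f := by
  obtain ⟨B₁, h₁⟩ := hQ
  obtain ⟨B₂, h₂⟩ := hR
  refine ⟨B₁ ∪ B₂, fun f hf => ⟨h₁ f (hf.mono ?_), h₂ f (hf.mono ?_)⟩⟩
  · exact_mod_cast Finset.coe_subset.mpr Finset.subset_union_left
  · exact_mod_cast Finset.coe_subset.mpr Finset.subset_union_right

theorem forces_one : Forces fun f : K → K => f 1 = 1 :=
  ⟨{1}, fun f hf => hf.1 (by simp)⟩

theorem forces_zero : Forces fun f : K → K => f 0 = 0 :=
  ⟨{0}, fun f hf => by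
    have h := hf.2.1 0 0 (by simp) (by simp) (by simp)
    rw [add_zero] at h
    exact left_eq_add.mp h⟩

theorem forces_add (a b : K) : Forces fun f : K → K => f (a + b) = f a + f b :=
  ⟨{a, b, a + b}, fun f hf => hf.2.1 a b (by simp) (by simp) (by simp)⟩

theorem forces_mul (a b : K) : Forces fun f : K → K => f (a * b) = f a * f b :=
  ⟨{a, b, a * b}, fun f hf => hf.2.2 a b (by simp) (by simp) (by simp)⟩

theorem forces_neg (a : K) : Forces fun f : K → K => f (-a) = - f a := by
  refine ((forces_add a (-a)).and forces_zero).mono ?_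
  rintro f ⟨h1, h2⟩
  rw [add_neg_cancel, h2] at h1
  exact (neg_eq_of_add_eq_zero_right h1.symm).symm

theorem forces_natCast : ∀ n : ℕ, Forces fun f : K → K => f (n : K) = n
  | 0 => forces_zero.mono (by intro f h; simpa using h)
  | (n + 1) => by
      refine (((forces_natCast n).and forces_one).and (forces_add (n : K) 1)).mono ?_
      rintro f ⟨⟨h1, h2⟩, h3⟩
      push_cast
      rw [h3, h1, h2]

theorem forces_intCast (m : ℤ) : Forces fun f : K → K => f (m : K) = m := by
  obtain ⟨n, rfl | rfl⟩ := m.eq_nat_or_neg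
  · refine (forces_natCast n).mono ?_
    intro f h
    push_cast
    exact h
  · refine ((forces_natCast n).and (forces_neg (n : K))).mono ?_
    rintro f ⟨h1, h2⟩
    push_cast
    rw [h2, h1]

theorem forces_ratCast (c : ℚ) : Forces fun f : K → K => f (c : K) = c := by
  have hden : ((c.den : K)) ≠ 0 := Nat.cast_ne_zero.mpr c.den_nz
  have key : (c.den : K) * (c : K) = (c.num : K) := by
    rw [Rat.cast_def]
    field_simp
  refine (((forces_natCast c.den).and (forces_intCast c.num)).and
      (forces_mul (c.den : K) (c : K))).mono ?_
  rintro f ⟨⟨h1, h2⟩, h3⟩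
  rw [key, h2, h1] at h3
  have h4 : (c.den : K) * f (c : K) = (c.den : K) * (c : K) := by rw [key, ← h3]
  exact mul_left_cancel₀ hden h4

theorem forces_pow (a : K) : ∀ n : ℕ, Forces fun f : K → K => f (a ^ n) = f a ^ n
  | 0 => forces_one.mono (by intro f h; simpa using h)
  | (n + 1) => by
      refine ((forces_pow a n).and (forces_mul (a ^ n) a)).mono ?_
      rintro f ⟨h1, h2⟩
      rw [pow_succ, pow_succ, h2, h1]

theorem forces_all {ι : Type*} (s : Finset ι) (Q : ι → (K → K) → Prop)
    (h : ∀ i ∈ s, Forces (Q i)) : Forces fun f => ∀ i ∈ s, Q i f := by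
  classical
  induction s using Finset.induction_on with
  | empty => exact ⟨∅, fun f _ i hi => absurd hi (by simp)⟩
  | @insert a s ha ih =>
    refine ((h a (by simp)).and (ih fun i hi => h i (by simp [hi]))).mono ?_
    rintro f ⟨h1, h2⟩ i hi
    rcases Finset.mem_insert.mp hi with rfl | hi
    · exact h1
    · exact h2 i hi

theorem forces_sum {ι : Type*} (s : Finset ι) (t : ι → K) :
    Forces fun f : K → K => f (∑ i ∈ s, t i) = ∑ i ∈ s, f (t i) := by
  classical
  induction s using Finset.induction_on with
  | empty => exact forces_zero.mono (by intro f h; simpa using h)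
  | @insert a s ha ih =>
    refine ((forces_add (t a) (∑ i ∈ s, t i)).and ih).mono ?_
    rintro f ⟨h1, h2⟩
    rw [Finset.sum_insert ha, h1, h2, Finset.sum_insert ha]

theorem forces_prod {ι : Type*} (s : Finset ι) (t : ι → K) :
    Forces fun f : K → K => f (∏ i ∈ s, t i) = ∏ i ∈ s, f (t i) := by
  classical
  induction s using Finset.induction_on with
  | empty => exact forces_one.mono (by intro f h; simpa using h)
  | @insert a s ha ih =>
    refine ((forces_mul (t a) (∏ i ∈ s, t i)).and ih).mono ?_
    rintro f ⟨h1, h2⟩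
    rw [Finset.prod_insert ha, h1, h2, Finset.prod_insert ha]

theorem forces_ne {u v : K} (huv : u ≠ v) : Forces fun f : K → K => f u ≠ f v := by
  have hne : u - v ≠ 0 := sub_ne_zero.mpr huv
  refine (((forces_mul (u - v) (u - v)⁻¹).and forces_one).and
      (forces_add (u - v) v)).mono ?_
  rintro f ⟨⟨h1, h2⟩, h3⟩
  rw [mul_inv_cancel₀ hne, h2] at h1
  have hne2 : f (u - v) ≠ 0 := left_ne_zero_of_mul_eq_one h1.symm
  rw [show u - v + v = u from by ring] at h3
  intro hEq
  rw [hEq] at h3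
  exact hne2 (right_eq_add.mp h3)

theorem aeval_pair_eq (g : MvPolynomial (Fin 2) ℚ) (x y : K) :
    MvPolynomial.aeval ![x, y] g
      = ∑ d ∈ g.support, ((MvPolynomial.coeff d g : ℚ) : K) * (x ^ d 0 * y ^ d 1) := by
  rw [MvPolynomial.aeval_def, MvPolynomial.eval₂_eq']
  refine Finset.sum_congr rfl fun d _ => ?_
  rw [Fin.prod_univ_two]
  simp [eq_ratCast, mul_assoc]

theorem forces_aeval (g : MvPolynomial (Fin 2) ℚ) {u s : K}
    (h : MvPolynomial.aeval ![u, s] g = 0) :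
    Forces fun f : K → K => MvPolynomial.aeval ![f u, f s] g = 0 := by
  classical
  have hterm : ∀ d ∈ g.support, Forces fun f : K → K =>
      f (((MvPolynomial.coeff d g : ℚ) : K) * (u ^ d 0 * s ^ d 1))
        = ((MvPolynomial.coeff d g : ℚ) : K) * (f u ^ d 0 * f s ^ d 1) := by
    intro d _
    refine ((((forces_ratCast (MvPolynomial.coeff d g)).and (forces_pow u (d 0))).and
        ((forces_pow s (d 1)).and (forces_mul (u ^ d 0) (s ^ d 1)))).and
        (forces_mul (((MvPolynomial.coeff d g : ℚ) : K)) (u ^ d 0 * s ^ d 1))).mono ?_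
    rintro f ⟨⟨⟨h1, h2⟩, ⟨h3, h4⟩⟩, h5⟩
    rw [h5, h4, h1, h2, h3]
  refine ((forces_sum g.support fun d => ((MvPolynomial.coeff d g : ℚ) : K) * (u ^ d 0 * s ^ d 1)).and
      ((forces_all g.support _ hterm).and forces_zero)).mono ?_
  rintro f ⟨h1, h2, h3⟩
  rw [aeval_pair_eq] at h ⊢
  have e1 : ∑ d ∈ g.support, ((MvPolynomial.coeff d g : ℚ) : K) * (f u ^ d 0 * f s ^ d 1)
      = ∑ d ∈ g.support, f (((MvPolynomial.coeff d g : ℚ) : K) * (u ^ d 0 * s ^ d 1)) :=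
    Finset.sum_congr rfl fun d hd => (h2 d hd).symm
  rw [e1, ← h1, h, h3]

end Aux

/-- Let `K` be a field of characteristic zero and `g(x, y) ∈ ℚ[x, y]`. If the set
`P = {u ∈ K : ∃ s ∈ K, g(u, s) = 0}` is finite and contains an element `w` transcendental
over `ℚ`, then some arithmetically fixed element of `K` is transcendental over `ℚ`. -/
theorem exists_arithFixed_transcendental (K : Type*) [Field K] [CharZero K]
    (g : MvPolynomial (Fin 2) ℚ)
    (hfin : {u : K | ∃ s : K, MvPolynomial.aeval ![u, s] g = 0}.Finite)
    (w : K) (hw : w ∈ {u : K | ∃ s : K, MvPolynomial.aeval ![u, s] g = 0})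
    (hwt : Transcendental ℚ w) :
    ∃ r : K, ArithFixed r ∧ Transcendental ℚ r := by
  classical
  set Pf : Finset K := hfin.toFinset with hPf
  have hmemPf : ∀ x : K, x ∈ Pf ↔ ∃ s : K, MvPolynomial.aeval ![x, s] g = 0 := fun x =>
    hfin.mem_toFinset
  set r : ℕ → K := fun k => ∑ t ∈ Pf.powersetCard k, ∏ i ∈ t, i with hr
  -- every `r k` is arithmetically fixed
  have hfix : ∀ k, ArithFixed (r k) := by
    intro k
    choose sw hsw using fun (u : K) (hu : u ∈ Pf) => (hmemPf u).mp hu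
    have H1 : Forces fun f : K → K => ∀ u ∈ Pf, f u ∈ Pf := by
      refine forces_all Pf (fun u f => f u ∈ Pf) ?_
      intro u hu
      exact (forces_aeval g (hsw u hu)).mono fun f hf => (hmemPf _).mpr ⟨f (sw u hu), hf⟩
    have H2 : Forces fun f : K → K => ∀ u ∈ Pf, ∀ v ∈ Pf, u ≠ v → f u ≠ f v := by
      refine forces_all Pf _ fun u _ => forces_all Pf _ fun v _ => ?_
      by_cases huv : u = v
      · exact ⟨∅, fun f _ hne => absurd huv hne⟩
      · exact (forces_ne huv).mono fun f hf _ => hf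
    have H3 : Forces fun f : K → K =>
        f (r k) = ∑ t ∈ Pf.powersetCard k, ∏ i ∈ t, f i := by
      refine ((forces_sum (Pf.powersetCard k) fun t => ∏ i ∈ t, i).and
          (forces_all (Pf.powersetCard k)
            (fun t f => f (∏ i ∈ t, i) = ∏ i ∈ t, f i)
            (fun t _ => forces_prod t fun i => i))).mono ?_
      rintro f ⟨h1, h2⟩
      rw [hr]
      rw [h1]
      exact Finset.sum_congr rfl fun t ht => h2 t ht
    obtain ⟨B, hB⟩ := (H1.and (H2.and H3))
    refine ⟨insert (r k) B, Finset.mem_insert_self _ _, fun f hf => ?_⟩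
    obtain ⟨h1, h2, h3⟩ :=
      hB f (hf.mono (by exact_mod_cast Finset.coe_subset.mpr (Finset.subset_insert _ _)))
    have hinj : Set.InjOn f ↑Pf := by
      intro a ha b hb hab
      by_contra hne
      exact h2 a (by simpa using ha) b (by simpa using hb) hne hab
    have himg : Pf.image f = Pf := by
      apply Finset.eq_of_subset_of_card_le
      · intro x hx
        obtain ⟨u, hu, rfl⟩ := Finset.mem_image.mp hx
        exact h1 u hu
      · rw [Finset.card_image_of_injOn hinj]
    have hkey : ∀ s t : Finset K, s ⊆ Pf → t ⊆ Pf → s.image f = t.image f → s ⊆ t := by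
      intro s t hs ht hst x hx
      have : f x ∈ t.image f := by rw [← hst]; exact Finset.mem_image_of_mem f hx
      obtain ⟨y, hy, hxy⟩ := Finset.mem_image.mp this
      have : y = x := hinj (ht hy) (hs hx) hxy
      rwa [← this]
    have hmapinj : Set.InjOn (fun t : Finset K => t.image f) ↑(Pf.powersetCard k) := by
      intro s hs t ht hst
      simp only [Finset.mem_coe, Finset.mem_powersetCard] at hs ht
      exact le_antisymm (hkey s t hs.1 ht.1 hst) (hkey t s ht.1 hs.1 hst.symm)
    have himgmem : ∀ t ∈ Pf.powersetCard k, t.image f ∈ Pf.powersetCard k := by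
      intro t ht
      rw [Finset.mem_powersetCard] at ht ⊢
      refine ⟨?_, ?_⟩
      · intro x hx
        obtain ⟨u, hu, rfl⟩ := Finset.mem_image.mp hx
        exact h1 u (ht.1 hu)
      · rw [Finset.card_image_of_injOn (hinj.mono (by exact_mod_cast ht.1))]
        exact ht.2
    have hsetimg : (Pf.powersetCard k).image (fun t => t.image f) = Pf.powersetCard k := by
      apply Finset.eq_of_subset_of_card_le
      · intro x hx
        obtain ⟨t, ht, rfl⟩ := Finset.mem_image.mp hx
        exact himgmem t ht
      · rw [Finset.card_image_of_injOn hmapinj]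
    rw [h3]
    calc ∑ t ∈ Pf.powersetCard k, ∏ i ∈ t, f i
        = ∑ t ∈ Pf.powersetCard k, ∏ i ∈ t.image f, i := by
          refine Finset.sum_congr rfl fun t ht => ?_
          have hsub := (Finset.mem_powersetCard.mp ht).1
          exact (Finset.prod_image (f := fun i : K => i) fun a ha b hb hab => hinj (hsub ha) (hsub hb) hab).symm
      _ = r k := by
          rw [hr]
          conv_lhs => rw [show (∑ t ∈ Pf.powersetCard k, ∏ i ∈ t.image f, i)
              = ∑ u ∈ (Pf.powersetCard k).image (fun t => t.image f), ∏ i ∈ u, i from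
            (Finset.sum_image (f := fun u : Finset K => ∏ i ∈ u, i)
              fun s hs t ht hst => hmapinj hs ht hst).symm]
          rw [hsetimg]
  -- some `r k` is transcendental
  by_contra hcon
  push_neg at hcon
  have halg : ∀ k, IsAlgebraic ℚ (r k) := fun k => by
    have := hcon (r k) (hfix k)
    simpa [Transcendental, not_not] using this
  set n := Pf.card with hn
  set q : Polynomial K := ∏ u ∈ Pf, (Polynomial.X - Polynomial.C u) with hq
  have hqmonic : q.Monic :=
    Polynomial.monic_prod_of_monic _ _ fun u _ => Polynomial.monic_X_sub_C u
  have hweval : Polynomial.eval w q = 0 := by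
    rw [hq, Polynomial.eval_prod]
    apply Finset.prod_eq_zero (show w ∈ Pf from (hmemPf w).mpr hw)
    simp
  have hdeg : q.natDegree = n := by
    rw [hq, Polynomial.natDegree_prod_of_monic _ _ fun u _ => Polynomial.monic_X_sub_C u]
    simp [Polynomial.natDegree_X_sub_C]
    rfl
  have hcoeff : ∀ i, IsAlgebraic ℚ (q.coeff i) := by
    intro i
    rcases le_or_gt i n with hi | hi
    · have hicard : i ≤ Multiset.card Pf.val := hi
      have hv := Multiset.prod_X_sub_C_coeff Pf.val hicard
      have hq2 : q = (Pf.val.map fun t => Polynomial.X - Polynomial.C t).prod := rfl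
      have he : ∀ j : ℕ, Pf.val.esymm j = r j := by
        intro j
        have := Finset.esymm_map_val (fun x : K => x) Pf j
        simpa [Multiset.map_id'] using this
      rw [hq2, hv, he]
      have h1 : IsIntegral ℚ ((-1 : K) ^ (Multiset.card Pf.val - i)) :=
        (isIntegral_one.neg).pow _
      exact ((h1.mul (halg _).isIntegral)).isAlgebraic
    · rw [Polynomial.coeff_eq_zero_of_natDegree_lt (by rw [hdeg]; exact hi)]
      exact isAlgebraic_zero
  have hLmem : ∀ i, q.coeff i ∈ integralClosure ℚ K := fun i => (hcoeff i).isIntegral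
  have hlift : q ∈ Polynomial.lifts (algebraMap (integralClosure ℚ K) K) := by
    rw [Polynomial.lifts_iff_coeff_lifts]
    intro i
    exact ⟨⟨q.coeff i, hLmem i⟩, rfl⟩
  obtain ⟨q₀, hq₀map, _, hq₀monic⟩ := Polynomial.lifts_and_degree_eq_and_monic hlift hqmonic
  have hwint : IsIntegral (integralClosure ℚ K) w := ⟨q₀, hq₀monic, by
    rw [← Polynomial.eval_map, hq₀map]
    exact hweval⟩
  exact hwt (isIntegral_trans w hwint).isAlgebraic
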